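/- Consider the inexact smoothed conditional gradient iteration: let u₁ ≥ u₂ ≥ … > 0, let ε_k ≥ 0 be error bounds, let x₀ = y₀ ∈ X, and for k ≥ 1 let g_k ∈ ℝⁿ be any vector with ‖g_k − ∇f_{u_k}(y_{k−1})‖₂ ≤ ε_k, let x_k ∈ argmin_{x∈X} ⟨g_k, x⟩, and set y_k := (1−γ_k) y_{k−1} + γ_k x_k with γ_k := 2/(k+1). Then for every k ≥ 1 and every x ∈ X, f(y_k) − f(x) ≤ (2/(k(k+1))) Σ_{i=1}^k [ i ε_i D_X + i M u_i + (M√n/u_i) D_X² ]. -/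

import Mathlib

set_option maxHeartbeats 1000000

open scoped RealInnerProductSpace

lemma grad_convex_ineq {n : ℕ} {f : EuclideanSpace ℝ (Fin n) → ℝ}
    {f' : EuclideanSpace ℝ (Fin n)} {a b : EuclideanSpace ℝ (Fin n)}
    (hconv : ConvexOn ℝ Set.univ f) (hgrad : HasGradientAt f f' a) :
    f a + ⟪f', b - a⟫ ≤ f b := by
  set φ : ℝ → ℝ := fun t => f (AffineMap.lineMap a b t) with hφ
  have hφconv : ConvexOn ℝ Set.univ φ := by
    have := hconv.comp_affineMap (AffineMap.lineMap a b)
    exact this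
  have hline : HasDerivAt (fun t : ℝ => AffineMap.lineMap a b t) (b - a) 0 := by
    have h1 : HasDerivAt (fun t : ℝ => t • (b - a) + a) ((1:ℝ) • (b - a)) 0 :=
      ((hasDerivAt_id 0).smul_const (b - a)).add_const a
    have heq : (fun t : ℝ => AffineMap.lineMap a b t) = fun t : ℝ => t • (b - a) + a := by
      funext t
      simp [AffineMap.lineMap_apply_module]
      module
    rw [heq]
    simpa using h1
  have hd : HasDerivAt φ ⟪f', b - a⟫ 0 := by
    have hF : HasFDerivAt f ((InnerProductSpace.toDual ℝ _) f') (AffineMap.lineMap a b (0:ℝ)) := by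
      simpa using hgrad.hasFDerivAt
    have := hF.comp_hasDerivAt 0 hline
    exact this
  have := hφconv.le_slope_of_hasDerivAt (Set.mem_univ 0) (Set.mem_univ 1) one_pos hd
  have hs : slope φ 0 1 = f b - f a := by
    simp [slope, φ]
  rw [hs] at this
  linarith

theorem stmt11 (n : ℕ) (hn : 1 ≤ n)
    (X : Set (EuclideanSpace ℝ (Fin n)))
    (hXcp : IsCompact X) (hXcv : Convex ℝ X) (hXne : X.Nonempty)
    (DX M : ℝ) (hM : 0 < M)
    (hDX : IsGreatest {d : ℝ | ∃ a ∈ X, ∃ b ∈ X, d = ‖a - b‖} DX)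
    (f : EuclideanSpace ℝ (Fin n) → ℝ)
    (hfconv : ConvexOn ℝ Set.univ f)
    (hLip : ∀ a ∈ X, ∀ b ∈ X, |f a - f b| ≤ M * ‖a - b‖)
    (fu : ℝ → EuclideanSpace ℝ (Fin n) → ℝ)
    (fu' : ℝ → EuclideanSpace ℝ (Fin n) → EuclideanSpace ℝ (Fin n))
    (hfuconv : ∀ u > (0 : ℝ), ConvexOn ℝ Set.univ (fu u))
    (hfugrad : ∀ u > (0 : ℝ), ∀ a, HasGradientAt (fu u) (fu' u a) a)
    (ha : ∀ u > (0 : ℝ), ∀ a, f a ≤ fu u a ∧ fu u a ≤ f a + M * u)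
    (hb : ∀ u > (0 : ℝ), ∀ a ∈ X, ∀ b ∈ X,
      fu u b ≤ fu u a + ⟪fu' u a, b - a⟫ + M * Real.sqrt n / (2 * u) * ‖b - a‖ ^ 2)
    (hc : ∀ u u' : ℝ, u ≥ u' → 0 < u' → ∀ a, fu u' a ≤ fu u a)
    (useq : ℕ → ℝ) (hupos : ∀ k ≥ 1, 0 < useq k) (humono : ∀ k ≥ 1, useq (k + 1) ≤ useq k)
    (εseq : ℕ → ℝ) (hεseq : ∀ k ≥ 1, 0 ≤ εseq k)
    (g : ℕ → EuclideanSpace ℝ (Fin n))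
    (x y : ℕ → EuclideanSpace ℝ (Fin n)) (γ : ℕ → ℝ) (hγ : ∀ k : ℕ, γ k = 2 / (k + 1))
    (hx0 : x 0 ∈ X) (hy0 : y 0 = x 0)
    (hg : ∀ k ≥ 1, ‖g k - fu' (useq k) (y (k - 1))‖ ≤ εseq k)
    (hxk : ∀ k ≥ 1, x k ∈ X ∧ ∀ z ∈ X, ⟪g k, x k⟫ ≤ ⟪g k, z⟫)
    (hyk : ∀ k ≥ 1, y k = (1 - γ k) • y (k - 1) + γ k • x k) :
    ∀ k ≥ 1, ∀ u ∈ X,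
      f (y k) - f u ≤ 2 / (k * (k + 1)) *
        ∑ i ∈ Finset.Icc 1 k,
          ((i : ℝ) * εseq i * DX + (i : ℝ) * M * useq i +
            M * Real.sqrt n / useq i * DX ^ 2) := by
  have hD : ∀ a ∈ X, ∀ b ∈ X, ‖a - b‖ ≤ DX := fun a ha' b hb' => hDX.2 ⟨a, ha', b, hb', rfl⟩
  have hD0 : 0 ≤ DX := by
    obtain ⟨a, ha'⟩ := hXne
    have := hD a ha' a ha'
    simpa using this
  have hsqn : 0 ≤ Real.sqrt n := Real.sqrt_nonneg _
  -- all iterates stay in X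
  have hγ0 : ∀ k : ℕ, 0 ≤ γ k := by
    intro k; rw [hγ]; positivity
  have hyX : ∀ k, y k ∈ X := by
    intro k
    induction k with
    | zero => rw [hy0]; exact hx0
    | succ k ih =>
      rw [hyk (k+1) (Nat.le_add_left 1 k)]
      simp only [Nat.add_sub_cancel]
      have hk0 : (0:ℝ) ≤ (k:ℝ) := Nat.cast_nonneg k
      have hγle : γ (k+1) ≤ 1 := by
        rw [hγ, div_le_one (by push_cast; linarith)]
        push_cast; linarith
      exact hXcv ih (hxk (k+1) (Nat.le_add_left 1 k)).1 (by linarith [hγ0 (k+1)])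
        (hγ0 (k+1)) (by ring)
  -- the one-step inequality
  have step : ∀ k, 1 ≤ k → ∀ z ∈ X,
      fu (useq k) (y k) - f z ≤ (1 - γ k) * (fu (useq k) (y (k-1)) - f z)
        + γ k * (M * useq k) + γ k * (εseq k * DX)
        + M * Real.sqrt n / (2 * useq k) * (γ k ^ 2 * DX ^ 2) := by
    intro k hk z hz
    have hupos' : 0 < useq k := hupos k hk
    have hpX : y (k-1) ∈ X := hyX _
    have hqX : x k ∈ X := (hxk k hk).1
    have hykX : y k ∈ X := hyX _
    have hyeq : y k - y (k-1) = γ k • (x k - y (k-1)) := by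
      rw [hyk k hk]; module
    have hb' := hb (useq k) hupos' (y (k-1)) hpX (y k) hykX
    have hip : ⟪fu' (useq k) (y (k-1)), y k - y (k-1)⟫
        = γ k * ⟪fu' (useq k) (y (k-1)), x k - y (k-1)⟫ := by
      rw [hyeq, real_inner_smul_right]
    have hnrm : ‖y k - y (k-1)‖ ^ 2 ≤ γ k ^ 2 * DX ^ 2 := by
      rw [hyeq, norm_smul, Real.norm_eq_abs, abs_of_nonneg (hγ0 k), mul_pow]
      have h1 : ‖x k - y (k-1)‖ ≤ DX := hD _ hqX _ hpX
      exact mul_le_mul_of_nonneg_left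
        (by nlinarith [norm_nonneg (x k - y (k-1))]) (by positivity)
    have key : ⟪fu' (useq k) (y (k-1)), x k - y (k-1)⟫
        ≤ (fu (useq k) z - fu (useq k) (y (k-1))) + εseq k * DX := by
      have h1 : ⟪g k, x k⟫ ≤ ⟪g k, z⟫ := (hxk k hk).2 z hz
      have h2 : ⟪fu' (useq k) (y (k-1)) - g k, x k - z⟫ ≤ εseq k * DX := by
        calc ⟪fu' (useq k) (y (k-1)) - g k, x k - z⟫
            ≤ ‖fu' (useq k) (y (k-1)) - g k‖ * ‖x k - z‖ := real_inner_le_norm _ _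
          _ ≤ εseq k * DX := by
              have h3 : ‖fu' (useq k) (y (k-1)) - g k‖ = ‖g k - fu' (useq k) (y (k-1))‖ :=
                norm_sub_rev _ _
              exact mul_le_mul (h3 ▸ hg k hk) (hD _ hqX _ hz) (norm_nonneg _) (hεseq k hk)
      have h4 : ⟪fu' (useq k) (y (k-1)), z - y (k-1)⟫
          ≤ fu (useq k) z - fu (useq k) (y (k-1)) := by
        have := grad_convex_ineq (hfuconv (useq k) hupos')
          (hfugrad (useq k) hupos' (y (k-1))) (b := z)
        linarith
      have e1 : ⟪fu' (useq k) (y (k-1)), x k - y (k-1)⟫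
          = ⟪fu' (useq k) (y (k-1)), z - y (k-1)⟫ + (⟪g k, x k⟫ - ⟪g k, z⟫)
            + ⟪fu' (useq k) (y (k-1)) - g k, x k - z⟫ := by
        simp only [inner_sub_left, inner_sub_right]
        ring
      linarith
    have ha' := (ha (useq k) hupos' z).2
    have hmul1 : γ k * ⟪fu' (useq k) (y (k-1)), x k - y (k-1)⟫
        ≤ γ k * ((fu (useq k) z - fu (useq k) (y (k-1))) + εseq k * DX) :=
      mul_le_mul_of_nonneg_left key (hγ0 k)
    have hmul2 : γ k * fu (useq k) z ≤ γ k * (f z + M * useq k) :=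
      mul_le_mul_of_nonneg_left ha' (hγ0 k)
    have hmul3 : M * Real.sqrt n / (2 * useq k) * ‖y k - y (k-1)‖ ^ 2
        ≤ M * Real.sqrt n / (2 * useq k) * (γ k ^ 2 * DX ^ 2) :=
      mul_le_mul_of_nonneg_left hnrm (by positivity)
    nlinarith [hb', hip, hmul1, hmul2, hmul3]
  -- main induction
  have main : ∀ k : ℕ, 1 ≤ k → ∀ z ∈ X,
      (k : ℝ) * ((k : ℝ) + 1) / 2 * (fu (useq k) (y k) - f z) ≤
      ∑ i ∈ Finset.Icc 1 k,
        ((i : ℝ) * εseq i * DX + (i : ℝ) * M * useq i +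
          M * Real.sqrt n / useq i * DX ^ 2) := by
    intro k hk
    induction k, hk using Nat.le_induction with
    | base =>
      intro z hz
      have hs := step 1 le_rfl z hz
      have hγ1 : γ 1 = 1 := by rw [hγ]; norm_num
      rw [hγ1] at hs
      have hu1 : 0 < useq 1 := hupos 1 le_rfl
      have hhalf : M * Real.sqrt n / (2 * useq 1) * DX ^ 2
          ≤ M * Real.sqrt n / useq 1 * DX ^ 2 := by
        have h2u : M * Real.sqrt n / (2 * useq 1) ≤ M * Real.sqrt n / useq 1 := by
          rw [div_le_div_iff₀ (by positivity) (by positivity)]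
          nlinarith [mul_nonneg (mul_nonneg hM.le hsqn) hu1.le]
        exact mul_le_mul_of_nonneg_right h2u (sq_nonneg DX)
      rw [Finset.Icc_self, Finset.sum_singleton]
      push_cast
      nlinarith [hs, hhalf]
    | succ k hk ih =>
      intro z hz
      have hk1 : (1:ℝ) ≤ (k:ℝ) := by exact_mod_cast hk
      have hkp2 : (0:ℝ) < (k:ℝ) + 2 := by linarith
      have hs := step (k+1) (by omega) z hz
      simp only [Nat.add_sub_cancel] at hs
      have hγval : γ (k+1) = 2/((k:ℝ)+2) := by
        rw [hγ]; push_cast; ring_nf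
      have hu' : 0 < useq (k+1) := hupos (k+1) (by omega)
      have hmono : fu (useq (k+1)) (y k) ≤ fu (useq k) (y k) :=
        hc (useq k) (useq (k+1)) (humono k hk) hu' _
      have h1γ : 0 ≤ 1 - γ (k+1) := by
        rw [hγval, sub_nonneg, div_le_one hkp2]; linarith
      have hs2 : fu (useq (k+1)) (y (k+1)) - f z
          ≤ (1 - γ (k+1)) * (fu (useq k) (y k) - f z)
            + γ (k+1) * (M * useq (k+1)) + γ (k+1) * (εseq (k+1) * DX)
            + M * Real.sqrt n / (2 * useq (k+1)) * (γ (k+1) ^ 2 * DX ^ 2) := by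
        have := mul_le_mul_of_nonneg_left (by linarith [hmono] :
          fu (useq (k+1)) (y k) - f z ≤ fu (useq k) (y k) - f z) h1γ
        linarith
      have ihz := ih z hz
      rw [Finset.sum_Icc_succ_top (by omega : 1 ≤ k+1)]
      set K := (k:ℝ) with hK
      set S := (K+1)*(K+2)/2 with hS
      have hS0 : 0 ≤ S := by rw [hS]; nlinarith
      have hmul := mul_le_mul_of_nonneg_left hs2 hS0
      rw [hγval] at hmul
      have hQ : 0 ≤ M * Real.sqrt n / useq (k+1) * DX ^ 2 := by positivity
      have e4 : S * (M * Real.sqrt n / (2 * useq (k+1)) * ((2/(K+2)) ^ 2 * DX ^ 2))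
          ≤ M * Real.sqrt n / useq (k+1) * DX ^ 2 := by
        have heq : S * (M * Real.sqrt n / (2 * useq (k+1)) * ((2/(K+2)) ^ 2 * DX ^ 2))
            = (K+1)/(K+2) * (M * Real.sqrt n / useq (k+1) * DX ^ 2) := by
          rw [hS]
          field_simp
        rw [heq]
        have hle1 : (K+1)/(K+2) ≤ 1 := by rw [div_le_one hkp2]; linarith
        exact mul_le_of_le_one_left hQ hle1
      have e1 : S * ((1 - 2/(K+2)) * (fu (useq k) (y k) - f z))
          = K * (K+1) / 2 * (fu (useq k) (y k) - f z) := by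
        rw [hS]; field_simp; ring
      have e2 : S * (2/(K+2) * (M * useq (k+1))) = (K+1) * (M * useq (k+1)) := by
        rw [hS]; field_simp
      have e3 : S * (2/(K+2) * (εseq (k+1) * DX)) = (K+1) * (εseq (k+1) * DX) := by
        rw [hS]; field_simp
      have hfinal : S * (fu (useq (k+1)) (y (k+1)) - f z)
          ≤ (∑ i ∈ Finset.Icc 1 k,
              ((i : ℝ) * εseq i * DX + (i : ℝ) * M * useq i +
                M * Real.sqrt n / useq i * DX ^ 2))
            + ((K+1) * (εseq (k+1) * DX) + (K+1) * (M * useq (k+1))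
              + M * Real.sqrt n / useq (k+1) * DX ^ 2) := by
        have hdist : S * ((1 - 2/(K+2)) * (fu (useq k) (y k) - f z)
            + 2/(K+2) * (M * useq (k+1)) + 2/(K+2) * (εseq (k+1) * DX)
            + M * Real.sqrt n / (2 * useq (k+1)) * ((2/(K+2)) ^ 2 * DX ^ 2))
            = S * ((1 - 2/(K+2)) * (fu (useq k) (y k) - f z))
              + S * (2/(K+2) * (M * useq (k+1))) + S * (2/(K+2) * (εseq (k+1) * DX))
              + S * (M * Real.sqrt n / (2 * useq (k+1)) * ((2/(K+2)) ^ 2 * DX ^ 2)) := by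
          ring
        rw [hdist, e1, e2, e3] at hmul
        linarith
      push_cast
      have hgoal : ((K+1) : ℝ) * ((K+1) + 1) / 2 = S := by rw [hS]; ring
      rw [hgoal]
      linarith
  intro k hk z hz
  have hm := main k hk z hz
  have hfy : f (y k) ≤ fu (useq k) (y k) := (ha (useq k) (hupos k hk) (y k)).1
  have hk1 : (1:ℝ) ≤ (k:ℝ) := by exact_mod_cast hk
  have hpos : 0 < (k:ℝ) * ((k:ℝ) + 1) := by nlinarith
  rw [div_mul_eq_mul_div, le_div_iff₀ hpos]
  have hf2 : 0 ≤ (fu (useq k) (y k) - f (y k)) * ((k:ℝ) * ((k:ℝ) + 1)) :=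
    mul_nonneg (by linarith) hpos.le
  nlinarith [hm, hf2]
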